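/- arXiv:1403.7322 — 5 statements merged into one kernel-verified Lean document; each statement's English description precedes it below -/
import Mathlib

section
/- Let K_R ≥ 0, γ > 0 and α ∈ (0,1). For each N ≥ 1 let R_N be the N×N complex matrix with entries (R_N)_{m,n} = (1/(K_R+1))·α^{|m−n|} (a Hermitian Toeplitz matrix, which is positive definite, so R_N + γ⁻¹I is invertible). Then the normalized trace (1/N)·trace(R_N − R_N(R_N + γ⁻¹I)⁻¹R_N), which is a real number, converges as N → ∞ to 1/√(γ² + 2γ·((1+α²)/(1−α²))·(K_R+1) + (K_R+1)²). -/
open Matrix Filter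

/-- The pilot-location delay-correlation matrix of the paper: the `N×N` complex Toeplitz
matrix with `(m,n)` entry `(1/(K_R+1))·α^{|m-n|}`. -/
noncomputable def pilotCorrMatrix (K_R α : ℝ) (N : ℕ) : Matrix (Fin N) (Fin N) ℂ :=
  Matrix.of fun m n : Fin N =>
    (((1 / (K_R + 1)) * α ^ ((m : ℤ) - (n : ℤ)).natAbs : ℝ) : ℂ)

open Finset
noncomputable section KMS
variable (a a' b : ℝ)

def psi : ℕ → ℝ
  | 0 => 1
  | 1 => a'
  | (n+2) => a * psi (n+1) - b^2 * psi n

lemma psi_zero : psi a a' b 0 = 1 := rfl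
lemma psi_one : psi a a' b 1 = a' := rfl
lemma psi_rec (n : ℕ) : psi a a' b (n+2) = a * psi a a' b (n+1) - b^2 * psi a a' b n := rfl

lemma psi_swap (k m : ℕ) :
    psi a a' b (k+2) * psi a a' b (m+1) - b^2 * psi a a' b (k+1) * psi a a' b m
    = psi a a' b (k+1) * psi a a' b (m+2) - b^2 * psi a a' b k * psi a a' b (m+1) := by
  rw [psi_rec, psi_rec]; ring

lemma wron : ∀ k m : ℕ, psi a a' b (k+1) * psi a a' b (m+1) - b^2 * psi a a' b k * psi a a' b m
    = a' * psi a a' b (k+m+1) - b^2 * psi a a' b (k+m) := by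
  intro k
  induction k with
  | zero => intro m; rw [psi_zero, psi_one]; ring_nf
  | succ n ih =>
    intro m
    rw [show n+1+1 = n+2 from rfl, psi_swap, ih (m+1), show n+(m+1) = n+1+m by omega]

def triS (N : ℕ) : Matrix (Fin N) (Fin N) ℝ :=
  Matrix.of fun i k : Fin N =>
    if (i : ℕ) = k then (if (i : ℕ) = 0 ∨ (i : ℕ) + 1 = N then a' else a)
    else if (i : ℕ) + 1 = k ∨ (k : ℕ) + 1 = i then b else 0

def Gf (N i j : ℕ) : ℝ :=
  (-b) ^ (max i j - min i j) * psi a a' b (min i j) * psi a a' b (N - 1 - max i j)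

def triG (N : ℕ) : Matrix (Fin N) (Fin N) ℝ :=
  Matrix.of fun i j : Fin N => Gf a a' b N i j

def thN (N : ℕ) : ℝ := a' * psi a a' b (N-1) - b^2 * psi a a' b (N-2)

lemma sum_ite_coe {N : ℕ} (m : ℕ) (hm : m < N) (f : Fin N → ℝ) :
    (∑ k : Fin N, if (k : ℕ) = m then f k else 0) = f ⟨m, hm⟩ := by
  rw [show f ⟨m, hm⟩ = if (⟨m, hm⟩ : Fin N) ∈ Finset.univ then f ⟨m, hm⟩ else 0 by simp]
  rw [← Finset.sum_ite_eq' Finset.univ (⟨m, hm⟩ : Fin N) f]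
  exact Finset.sum_congr rfl fun k _ => by simp [Fin.ext_iff]

lemma sum_ite_coe_zero {N : ℕ} (m : ℕ) (hm : ¬ m < N) (f : Fin N → ℝ) :
    (∑ k : Fin N, if (k : ℕ) = m then f k else 0) = 0 := by
  apply Finset.sum_eq_zero
  intro k _
  rw [if_neg]
  exact fun h => hm (h ▸ k.isLt)

lemma triS_mul_apply {N : ℕ} (X : Matrix (Fin N) (Fin N) ℝ) (i j : Fin N) :
    (triS a a' b N * X) i j =
      (if (i : ℕ) = 0 ∨ (i : ℕ) + 1 = N then a' else a) * X i j
      + (if h : 0 < (i : ℕ) then b * X ⟨(i : ℕ) - 1, by omega⟩ j else 0)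
      + (if h : (i : ℕ) + 1 < N then b * X ⟨(i : ℕ) + 1, h⟩ j else 0) := by
  rw [Matrix.mul_apply]
  have hsplit : ∀ k : Fin N, triS a a' b N i k * X k j =
      (if (k : ℕ) = (i : ℕ) then (if (i : ℕ) = 0 ∨ (i : ℕ) + 1 = N then a' else a) * X k j else 0)
      + (if (k : ℕ) = (i : ℕ) - 1 ∧ 0 < (i : ℕ) then b * X k j else 0)
      + (if (k : ℕ) = (i : ℕ) + 1 then b * X k j else 0) := by
    intro k
    simp only [triS, Matrix.of_apply]
    split_ifs <;> first | ring1 | (exfalso; omega)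
  rw [Finset.sum_congr rfl fun k _ => hsplit k, Finset.sum_add_distrib, Finset.sum_add_distrib]
  congr 1
  · congr 1
    · exact sum_ite_coe (i : ℕ) i.isLt _
    · by_cases h : 0 < (i : ℕ)
      · rw [dif_pos h]
        rw [show (∑ k : Fin N, if (k : ℕ) = (i:ℕ) - 1 ∧ 0 < (i:ℕ) then b * X k j else 0)
              = ∑ k : Fin N, if (k : ℕ) = (i:ℕ) - 1 then b * X k j else 0 from
            Finset.sum_congr rfl fun k _ => by simp [h]]
        exact sum_ite_coe ((i:ℕ) - 1) (by omega) _
      · rw [dif_neg h]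
        apply Finset.sum_eq_zero
        intro k _
        rw [if_neg (fun hc => h hc.2)]
  · by_cases h : (i : ℕ) + 1 < N
    · rw [dif_pos h]
      exact sum_ite_coe ((i:ℕ) + 1) h _
    · rw [dif_neg h]
      exact sum_ite_coe_zero _ (by omega) _

/-- Row formula with ℕ-level entry function. -/
lemma triS_mul_apply' {N : ℕ} (X : Matrix (Fin N) (Fin N) ℝ) (Xf : ℕ → ℕ → ℝ)
    (hX : ∀ u v : Fin N, X u v = Xf u v) (i j : Fin N) :
    (triS a a' b N * X) i j =
      (if (i : ℕ) = 0 ∨ (i : ℕ) + 1 = N then a' else a) * Xf i j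
      + (if 0 < (i : ℕ) then b * Xf ((i:ℕ) - 1) j else 0)
      + (if (i : ℕ) + 1 < N then b * Xf ((i:ℕ) + 1) j else 0) := by
  rw [triS_mul_apply]
  congr 1
  congr 1
  · rw [hX]
  · by_cases h : 0 < (i : ℕ)
    · rw [dif_pos h, if_pos h, hX]
    · rw [dif_neg h, if_neg h]
  · by_cases h : (i : ℕ) + 1 < N
    · rw [dif_pos h, if_pos h, hX]
    · rw [dif_neg h, if_neg h]

lemma Gf_eq {N i j : ℕ} (u v w : ℕ) (h1 : min i j = u) (h2 : max i j - min i j = v)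
    (h3 : N - 1 - max i j = w) : Gf a a' b N i j = (-b)^v * psi a a' b u * psi a a' b w := by
  rw [Gf, h3, h2, h1]

lemma triS_mul_triG {N : ℕ} (hN : 2 ≤ N) :
    triS a a' b N * triG a a' b N = thN a a' b N • (1 : Matrix (Fin N) (Fin N) ℝ) := by
  ext i j
  rw [triS_mul_apply' a a' b (triG a a' b N) (Gf a a' b N) (fun u v => rfl), Matrix.smul_apply, Matrix.one_apply, smul_eq_mul]
  by_cases hi0 : (i : ℕ) = 0
  · rw [if_pos (Or.inl hi0), if_neg (by omega), if_pos (show (i:ℕ)+1 < N by omega)]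
    by_cases hj0 : (j : ℕ) = 0
    · rw [if_pos (Fin.ext (by omega : (i:ℕ) = (j:ℕ)))]
      rw [Gf_eq a a' b 0 0 (N-1) (by omega) (by omega) (by omega),
          Gf_eq a a' b 0 1 (N-2) (by omega) (by omega) (by omega)]
      simp only [pow_zero, pow_one, psi_zero, thN]
      ring
    · rw [if_neg (show ¬ i = j from fun h => by subst h; omega)]
      rw [Gf_eq a a' b 0 (((j:ℕ)-1)+1) (N-1-(j:ℕ)) (by omega) (by omega) (by omega),
          Gf_eq a a' b 1 ((j:ℕ)-1) (N-1-(j:ℕ)) (by omega) (by omega) (by omega)]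
      rw [pow_succ, psi_zero, psi_one]
      ring
  · by_cases hiN : (i : ℕ) + 1 = N
    · rw [if_pos (Or.inr hiN), if_pos (by omega), if_neg (by omega)]
      by_cases hji : (j : ℕ) = (i : ℕ)
      · rw [if_pos (Fin.ext (by omega : (i:ℕ) = (j:ℕ)))]
        rw [Gf_eq a a' b (N-1) 0 0 (by omega) (by omega) (by omega),
            Gf_eq a a' b (N-2) 1 0 (by omega) (by omega) (by omega)]
        simp only [pow_zero, pow_one, psi_zero, thN]
        ring
      · rw [if_neg (show ¬ i = j from fun h => by subst h; omega)]
        have hjlt : (j:ℕ) < (i:ℕ) := by omega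
        rw [Gf_eq a a' b ((j:ℕ)) ((N-2-(j:ℕ))+1) 0 (by omega) (by omega) (by omega),
            Gf_eq a a' b ((j:ℕ)) (N-2-(j:ℕ)) 1 (by omega) (by omega) (by omega)]
        rw [pow_succ, psi_zero, psi_one]
        ring
    · rw [if_neg (by omega), if_pos (by omega), if_pos (by omega)]
      have hr : psi a a' b ((i:ℕ)+1) = a * psi a a' b (i:ℕ) - b^2 * psi a a' b ((i:ℕ)-1) := by
        rw [show (i:ℕ)+1 = ((i:ℕ)-1)+2 by omega, psi_rec, show (i:ℕ)-1+1 = (i:ℕ) by omega]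
      rcases lt_trichotomy (j:ℕ) (i:ℕ) with hlt | heq | hgt
      · rw [if_neg (show ¬ i = j from fun h => by subst h; omega)]
        rw [Gf_eq a a' b ((j:ℕ)) (((i:ℕ)-1-(j:ℕ))+1) ((N-2-(i:ℕ))+1) (by omega) (by omega) (by omega),
            Gf_eq a a' b ((j:ℕ)) ((i:ℕ)-1-(j:ℕ)) (((N-2-(i:ℕ))+1)+1) (by omega) (by omega) (by omega),
            Gf_eq a a' b ((j:ℕ)) ((((i:ℕ)-1-(j:ℕ))+1)+1) (N-2-(i:ℕ)) (by omega) (by omega) (by omega)]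
        rw [show (N-2-(i:ℕ))+1+1 = (N-2-(i:ℕ))+2 from rfl, psi_rec, pow_succ, pow_succ]
        ring
      · rw [if_pos (Fin.ext (by omega : (i:ℕ) = (j:ℕ)))]
        have hw := wron a a' b (i:ℕ) (N-2-(i:ℕ))
        rw [show (i:ℕ) + (N-2-(i:ℕ)) = N-2 by omega] at hw
        rw [Gf_eq a a' b ((i:ℕ)) 0 ((N-2-(i:ℕ))+1) (by omega) (by omega) (by omega),
            Gf_eq a a' b ((i:ℕ)-1) 1 ((N-2-(i:ℕ))+1) (by omega) (by omega) (by omega),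
            Gf_eq a a' b ((i:ℕ)) 1 (N-2-(i:ℕ)) (by omega) (by omega) (by omega)]
        simp only [pow_zero, pow_one, thN]
        rw [show N-2+1 = N-1 by omega] at hw
        linear_combination hw - psi a a' b ((N-2-(i:ℕ))+1) * hr
      · rw [if_neg (show ¬ i = j from fun h => by subst h; omega)]
        rw [Gf_eq a a' b ((i:ℕ)) (((j:ℕ)-((i:ℕ)+1))+1) (N-1-(j:ℕ)) (by omega) (by omega) (by omega),
            Gf_eq a a' b ((i:ℕ)-1) ((((j:ℕ)-((i:ℕ)+1))+1)+1) (N-1-(j:ℕ)) (by omega) (by omega) (by omega),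
            Gf_eq a a' b ((i:ℕ)+1) ((j:ℕ)-((i:ℕ)+1)) (N-1-(j:ℕ)) (by omega) (by omega) (by omega)]
        rw [pow_succ, pow_succ]
        linear_combination b * (-b)^((j:ℕ)-((i:ℕ)+1)) * psi a a' b (N-1-(j:ℕ)) * hr

lemma trace_limit (ha : 0 < a) (hb : b ≠ 0) (hD : 4*b^2 < a^2) (ha2 : a < 2*a') :
    (∀ N : ℕ, 2 ≤ N → 0 < thN a a' b N) ∧
    Tendsto (fun N : ℕ => (∑ i ∈ Finset.range N, psi a a' b i * psi a a' b (N-1-i))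
        / (N * thN a a' b N)) atTop (nhds (1 / Real.sqrt (a^2 - 4*b^2))) := by
  have hD0 : (0:ℝ) ≤ a^2 - 4*b^2 := by linarith
  set sd := Real.sqrt (a^2 - 4*b^2) with hsd_def
  have hsd2 : sd^2 = a^2 - 4*b^2 := Real.sq_sqrt hD0
  have hb2 : 0 < b^2 := by rcases hb.lt_or_gt with h|h <;> nlinarith
  have hsd0 : 0 < sd := Real.sqrt_pos.mpr (by nlinarith)
  have h4 : (a-sd)*(a+sd) = 4*b^2 := by linear_combination -hsd2
  have hsda : sd < a := by nlinarith
  set rp := (a + sd)/2 with hrp_def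
  set rm := (a - sd)/2 with hrm_def
  have hrm0 : 0 < rm := by simp only [hrm_def]; linarith
  have hrp0 : 0 < rp := by simp only [hrp_def]; linarith
  have hrmrp : rm < rp := by simp only [hrp_def, hrm_def]; linarith
  have hsum : rp + rm = a := by simp only [hrp_def, hrm_def]; ring
  have hdiff : rp - rm = sd := by simp only [hrp_def, hrm_def]; ring
  have hprod : rp * rm = b^2 := by
    simp only [hrp_def, hrm_def]; linear_combination (-(1:ℝ)/4) * hsd2
  have hrp2 : rp^2 = a*rp - b^2 := by linear_combination rp * hsum - hprod
  have hrm2 : rm^2 = a*rm - b^2 := by linear_combination rm * hsum - hprod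
  set A := (a' - rm)/sd with hA_def
  set B := (rp - a')/sd with hB_def
  have hArm : 0 < a' - rm := by simp only [hrm_def]; linarith
  have hA0 : 0 < A := div_pos hArm hsd0
  clear_value sd rp rm A B
  have hpsi2 : ∀ n : ℕ, psi a a' b n = A*rp^n + B*rm^n ∧
      psi a a' b (n+1) = A*rp^(n+1) + B*rm^(n+1) := by
    intro n
    induction n with
    | zero =>
      constructor
      · rw [psi_zero]
        have h1 : A + B = (rp - rm)/sd := by rw [hA_def, hB_def]; ring
        rw [pow_zero, pow_zero, mul_one, mul_one, h1, hdiff, div_self hsd0.ne']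
      · rw [psi_one]
        have h1 : A*rp^1 + B*rm^1 = a'*(rp - rm)/sd := by rw [hA_def, hB_def]; ring
        rw [h1, hdiff, mul_div_assoc, div_self hsd0.ne', mul_one]
    | succ n ih =>
      refine ⟨ih.2, ?_⟩
      rw [show n+1+1 = n+2 from rfl, psi_rec, ih.1, ih.2]
      have e1 : rp^(n+2) = a*rp^(n+1) - b^2*rp^n := by
        have h : rp^(n+2) = rp^n * rp^2 := by ring
        rw [h, hrp2]; ring
      have e2 : rm^(n+2) = a*rm^(n+1) - b^2*rm^n := by
        have h : rm^(n+2) = rm^n * rm^2 := by ring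
        rw [h, hrm2]; ring
      rw [e1, e2]; ring
  have hpsi : ∀ n : ℕ, psi a a' b n = A*rp^n + B*rm^n := fun n => (hpsi2 n).1
  have hth : ∀ N : ℕ, 2 ≤ N →
      thN a a' b N = A*(a'-rm)*rp^(N-1) + B*(a'-rp)*rm^(N-1) := by
    intro N hN
    obtain ⟨M, rfl⟩ : ∃ M, N = M + 2 := ⟨N - 2, by omega⟩
    simp only [thN]
    rw [show M+2-1 = M+1 by omega, show M+2-2 = M by omega, hpsi (M+1), hpsi M]
    linear_combination (A*rp^M + B*rm^M) * hprod
  have hthsd : ∀ N : ℕ, 2 ≤ N →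
      thN a a' b N = ((a'-rm)^2*rp^(N-1) - (rp-a')^2*rm^(N-1))/sd := by
    intro N hN
    rw [hth N hN]
    simp only [hA_def, hB_def]
    field_simp
    ring
  have hsq : (rp - a')^2 < (a' - rm)^2 := by
    have h1 : rp - a' < a' - rm := by linarith
    have h2 : -(a' - rm) < rp - a' := by linarith
    nlinarith
  have hthpos : ∀ N : ℕ, 2 ≤ N → 0 < thN a a' b N := by
    intro N hN
    rw [hthsd N hN]
    apply div_pos _ hsd0
    have h1 : (rp-a')^2 * rm^(N-1) ≤ (rp-a')^2 * rp^(N-1) :=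
      mul_le_mul_of_nonneg_left (pow_le_pow_left₀ (le_of_lt hrm0) (le_of_lt hrmrp) _) (sq_nonneg _)
    have h2 : (rp-a')^2 * rp^(N-1) < (a'-rm)^2 * rp^(N-1) :=
      mul_lt_mul_of_pos_right hsq (pow_pos hrp0 _)
    linarith
  refine ⟨hthpos, ?_⟩
  set q := rm/rp with hq_def
  clear_value q
  have hq0 : 0 ≤ q := hq_def ▸ le_of_lt (div_pos hrm0 hrp0)
  have hq1 : q < 1 := hq_def ▸ (div_lt_one hrp0).mpr hrmrp
  have hqpow : ∀ m : ℕ, q^m * rp^m = rm^m := by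
    intro m
    rw [hq_def, div_pow, div_mul_cancel₀ _ (pow_ne_zero m hrp0.ne')]
  set num : ℕ → ℝ := fun N => A^2 + B^2 * q^(N-1) + 2*A*B*((1/(N:ℝ)) * ∑ j ∈ Finset.range N, q^j) with hnum_def
  set den : ℕ → ℝ := fun N => A*(a'-rm) + B*(a'-rp)*q^(N-1) with hden_def
  have hkey : ∀ N : ℕ, 1 ≤ N → (∑ i ∈ Finset.range N, psi a a' b i * psi a a' b (N-1-i))
      = ((N:ℝ)*A^2 + (N:ℝ)*B^2*q^(N-1) + 2*A*B*(∑ j ∈ Finset.range N, q^j)) * rp^(N-1) := by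
    intro N hN
    have step : ∀ i ∈ Finset.range N, psi a a' b i * psi a a' b (N-1-i)
        = (A^2*rp^(N-1) + B^2*rm^(N-1)) + (A*B*rp^(N-1))*q^(N-1-i) + (A*B*rp^(N-1))*q^i := by
      intro i hi
      rw [Finset.mem_range] at hi
      rw [hpsi i, hpsi (N-1-i)]
      have e1 : rp^i * rp^(N-1-i) = rp^(N-1) := by
        rw [← pow_add]; congr 1; omega
      have e2 : rm^i * rm^(N-1-i) = rm^(N-1) := by
        rw [← pow_add]; congr 1; omega
      have e3 : rp^i * rm^(N-1-i) = q^(N-1-i)*rp^(N-1) := by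
        rw [← hqpow (N-1-i)]
        have : rp^(N-1) = rp^i * rp^(N-1-i) := e1.symm
        rw [this]; ring
      have e4 : rm^i * rp^(N-1-i) = q^i*rp^(N-1) := by
        rw [← hqpow i]
        have : rp^(N-1) = rp^(N-1-i) * rp^i := by rw [← pow_add]; congr 1; omega
        rw [this]; ring
      calc (A*rp^i + B*rm^i) * (A*rp^(N-1-i) + B*rm^(N-1-i))
          = A^2*(rp^i*rp^(N-1-i)) + B^2*(rm^i*rm^(N-1-i))
            + A*B*(rp^i*rm^(N-1-i)) + A*B*(rm^i*rp^(N-1-i)) := by ring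
        _ = _ := by rw [e1, e2, e3, e4]; ring
    rw [Finset.sum_congr rfl step]
    rw [Finset.sum_add_distrib, Finset.sum_add_distrib, Finset.sum_add_distrib]
    rw [Finset.sum_const, Finset.sum_const, Finset.card_range]
    rw [← Finset.mul_sum, ← Finset.mul_sum]
    rw [show (∑ i ∈ Finset.range N, q^(N-1-i)) = ∑ j ∈ Finset.range N, q^j from
      Finset.sum_range_reflect (fun j => q^j) N]
    rw [nsmul_eq_mul, nsmul_eq_mul, ← hqpow (N-1)]
    ring
  have hthden : ∀ N : ℕ, 2 ≤ N → thN a a' b N = den N * rp^(N-1) := by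
    intro N hN
    rw [hth N hN, hden_def]
    simp only
    rw [add_mul, mul_assoc (B*(a'-rp)), hqpow]
  have hF : ∀ N : ℕ, 2 ≤ N → (∑ i ∈ Finset.range N, psi a a' b i * psi a a' b (N-1-i))
      / ((N:ℝ) * thN a a' b N) = num N / den N := by
    intro N hN
    have hNne : ((N:ℝ)) ≠ 0 := Nat.cast_ne_zero.mpr (by omega)
    have hrpne : rp^(N-1) ≠ 0 := (pow_pos hrp0 _).ne'
    have hdenne : den N ≠ 0 := by
      have hp := hthpos N hN
      rw [hthden N hN] at hp
      intro h
      rw [h, zero_mul] at hp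
      exact lt_irrefl _ hp
    rw [hkey N (by omega), hthden N hN]
    simp only [hnum_def, hden_def] at hdenne ⊢
    field_simp
  have l1 : Tendsto (fun N : ℕ => q^(N-1)) atTop (nhds 0) :=
    (tendsto_pow_atTop_nhds_zero_of_lt_one hq0 hq1).comp (tendsto_sub_atTop_nat 1)
  have l2 : Tendsto (fun N : ℕ => 1/(N:ℝ)) atTop (nhds 0) := tendsto_one_div_atTop_nhds_zero_nat
  have l3 : Tendsto (fun N : ℕ => ∑ j ∈ Finset.range N, q^j) atTop (nhds (1-q)⁻¹) :=
    (hasSum_geometric_of_lt_one hq0 hq1).tendsto_sum_nat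
  have hnumt : Tendsto num atTop (nhds (A^2 + B^2*0 + 2*A*B*(0*(1-q)⁻¹))) := by
    rw [hnum_def]
    exact (tendsto_const_nhds.add (tendsto_const_nhds.mul l1)).add ((l2.mul l3).const_mul (2*A*B))
  have hdent : Tendsto den atTop (nhds (A*(a'-rm) + B*(a'-rp)*0)) := by
    rw [hden_def]
    exact tendsto_const_nhds.add (tendsto_const_nhds.mul l1)
  have hdenne0 : A*(a'-rm) + B*(a'-rp)*0 ≠ 0 := by
    have : 0 < A*(a'-rm) := mul_pos hA0 hArm
    intro h; rw [mul_zero, add_zero] at h; rw [h] at this; exact lt_irrefl _ this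
  have hdiv := hnumt.div hdent hdenne0
  have hval : (A^2 + B^2*0 + 2*A*B*(0*(1-q)⁻¹)) / (A*(a'-rm) + B*(a'-rp)*0) = 1/sd := by
    rw [hA_def]
    field_simp
    ring
  rw [hval] at hdiv
  refine Tendsto.congr' ?_ hdiv
  filter_upwards [eventually_ge_atTop 2] with N hN using (hF N hN).symm
def Tf (α : ℝ) (i j : ℕ) : ℝ := α ^ (max i j - min i j)

def Tm (α : ℝ) (N : ℕ) : Matrix (Fin N) (Fin N) ℝ :=
  Matrix.of fun i j : Fin N => Tf α i j

lemma Tf_eq (α : ℝ) (i j : ℕ) (v : ℕ) (h : max i j - min i j = v) : Tf α i j = α ^ v := by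
  rw [Tf, h]

lemma triB_mul_Tm (α : ℝ) {N : ℕ} (hN : 2 ≤ N) :
    triS (1+α^2) 1 (-α) N * Tm α N = (1 - α^2) • (1 : Matrix (Fin N) (Fin N) ℝ) := by
  ext i j
  rw [triS_mul_apply' (1+α^2) 1 (-α) (Tm α N) (Tf α) (fun u v => rfl) i j,
      Matrix.smul_apply, Matrix.one_apply, smul_eq_mul]
  by_cases hi0 : (i : ℕ) = 0
  · rw [if_pos (Or.inl hi0), if_neg (by omega), if_pos (show (i:ℕ)+1 < N by omega)]
    by_cases hj0 : (j : ℕ) = 0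
    · rw [if_pos (Fin.ext (by omega : (i:ℕ) = (j:ℕ))), Tf_eq α (i:ℕ) (j:ℕ) 0 (by omega),
          Tf_eq α ((i:ℕ)+1) (j:ℕ) 1 (by omega)]
      ring
    · rw [if_neg (show ¬ i = j from fun h => by subst h; omega),
          Tf_eq α (i:ℕ) (j:ℕ) (((j:ℕ)-1)+1) (by omega),
          Tf_eq α ((i:ℕ)+1) (j:ℕ) ((j:ℕ)-1) (by omega), pow_succ]
      ring
  · by_cases hiN : (i : ℕ) + 1 = N
    · rw [if_pos (Or.inr hiN), if_pos (by omega), if_neg (by omega)]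
      by_cases hji : (j : ℕ) = (i : ℕ)
      · rw [if_pos (Fin.ext (by omega : (i:ℕ) = (j:ℕ))), Tf_eq α (i:ℕ) (j:ℕ) 0 (by omega),
            Tf_eq α ((i:ℕ)-1) (j:ℕ) 1 (by omega)]
        ring
      · rw [if_neg (show ¬ i = j from fun h => by subst h; omega),
            Tf_eq α (i:ℕ) (j:ℕ) (((i:ℕ)-1-(j:ℕ))+1) (by omega),
            Tf_eq α ((i:ℕ)-1) (j:ℕ) ((i:ℕ)-1-(j:ℕ)) (by omega), pow_succ]
        ring
    · rw [if_neg (by omega), if_pos (by omega), if_pos (by omega)]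
      rcases lt_trichotomy (j:ℕ) (i:ℕ) with hlt | heq | hgt
      · rw [if_neg (show ¬ i = j from fun h => by subst h; omega),
            Tf_eq α (i:ℕ) (j:ℕ) (((i:ℕ)-1-(j:ℕ))+1) (by omega),
            Tf_eq α ((i:ℕ)-1) (j:ℕ) ((i:ℕ)-1-(j:ℕ)) (by omega),
            Tf_eq α ((i:ℕ)+1) (j:ℕ) ((((i:ℕ)-1-(j:ℕ))+1)+1) (by omega), pow_succ, pow_succ]
        ring
      · rw [if_pos (Fin.ext (by omega : (i:ℕ) = (j:ℕ))), Tf_eq α (i:ℕ) (j:ℕ) 0 (by omega),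
            Tf_eq α ((i:ℕ)-1) (j:ℕ) 1 (by omega), Tf_eq α ((i:ℕ)+1) (j:ℕ) 1 (by omega)]
        ring
      · rw [if_neg (show ¬ i = j from fun h => by subst h; omega),
            Tf_eq α (i:ℕ) (j:ℕ) (((j:ℕ)-((i:ℕ)+1))+1) (by omega),
            Tf_eq α ((i:ℕ)-1) (j:ℕ) ((((j:ℕ)-((i:ℕ)+1))+1)+1) (by omega),
            Tf_eq α ((i:ℕ)+1) (j:ℕ) ((j:ℕ)-((i:ℕ)+1)) (by omega), pow_succ, pow_succ]
        ring
end KMS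


/-- Theorem 1 of the paper: for `K_R ≥ 0`, `γ > 0`, `α ∈ (0,1)`, the normalized trace
`(1/N)·trace(R_N - R_N (R_N + γ⁻¹ I)⁻¹ R_N)` of the MMSE error correlation matrix built from
the Toeplitz correlation matrix `R_N` with entries `(1/(K_R+1))·α^{|m-n|}` converges, as
`N → ∞`, to `1/√(γ² + 2γ((1+α²)/(1-α²))(K_R+1) + (K_R+1)²)`. -/
theorem asymptotic_mse_pilot_locations (K_R γ α : ℝ) (hK : 0 ≤ K_R) (hγ : 0 < γ)
    (hα : α ∈ Set.Ioo (0 : ℝ) 1) :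
    Tendsto (fun N : ℕ =>
        (1 / (N : ℂ)) * Matrix.trace
          (pilotCorrMatrix K_R α N -
            pilotCorrMatrix K_R α N *
              (pilotCorrMatrix K_R α N + ((γ⁻¹ : ℝ) : ℂ) • (1 : Matrix (Fin N) (Fin N) ℂ))⁻¹ *
              pilotCorrMatrix K_R α N))
      atTop
      (nhds (((1 / Real.sqrt (γ ^ 2 + 2 * γ * ((1 + α ^ 2) / (1 - α ^ 2)) * (K_R + 1)
          + (K_R + 1) ^ 2) : ℝ) : ℂ))) := by
  obtain ⟨hα0, hα1⟩ := hα
  have hα2 : 0 < 1 - α^2 := by nlinarith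
  have hc : 0 < K_R + 1 := by linarith
  set aa : ℝ := (K_R+1)*(1+α^2)/(1-α^2) + γ with haa_def
  set ap : ℝ := (K_R+1)/(1-α^2) + γ with hap_def
  set bb : ℝ := -((K_R+1)*α/(1-α^2)) with hbb_def
  clear_value aa ap bb
  have ha : 0 < aa := by
    have h1 : 0 < (K_R+1)*(1+α^2)/(1-α^2) := by positivity
    simp only [haa_def]; linarith
  have hb : bb ≠ 0 := by
    have h1 : 0 < (K_R+1)*α/(1-α^2) := by positivity
    simp only [hbb_def]; intro h; rw [neg_eq_zero] at h; linarith
  have hplus : 0 < aa + 2*bb := by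
    have h1 : aa + 2*bb = (K_R+1)*(1-α)^2/(1-α^2) + γ := by
      simp only [haa_def, hbb_def]; field_simp; ring
    have h2 : 0 ≤ (K_R+1)*(1-α)^2/(1-α^2) := by positivity
    linarith
  have hminus : 0 < aa - 2*bb := by
    have h1 : 0 < (K_R+1)*α/(1-α^2) := by positivity
    simp only [haa_def, hbb_def]
    have h2 : 0 < (K_R+1)*(1+α^2)/(1-α^2) := by positivity
    linarith [h1, h2, hγ]
  have hD : 4*bb^2 < aa^2 := by nlinarith [mul_pos hplus hminus]
  have ha2 : aa < 2*ap := by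
    have h1 : 2*ap - aa = (K_R+1) + γ := by
      simp only [haa_def, hap_def]; field_simp; ring
    linarith
  obtain ⟨hthpos, htend⟩ := trace_limit aa ap bb ha hb hD ha2
  have harg : aa^2-4*bb^2
      = γ^2 + 2*γ*((1+α^2)/(1-α^2))*(K_R+1) + (K_R+1)^2 := by
    simp only [haa_def, hbb_def]
    field_simp
    ring
  rw [← harg]
  have hmain : ∀ N : ℕ, 2 ≤ N →
      (1 / (N : ℂ)) * Matrix.trace
          (pilotCorrMatrix K_R α N -
            pilotCorrMatrix K_R α N *
              (pilotCorrMatrix K_R α N + ((γ⁻¹ : ℝ) : ℂ) • (1 : Matrix (Fin N) (Fin N) ℂ))⁻¹ *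
              pilotCorrMatrix K_R α N)
      = Complex.ofReal ((∑ i ∈ Finset.range N, psi aa ap bb i * psi aa ap bb (N-1-i))
          / ((N:ℝ) * thN aa ap bb N)) := by
    intro N hN
    set θ : ℝ := thN aa ap bb N with hθ_def
    have hθ0 : 0 < θ := hthpos N hN
    set φ : ℝ →+* ℂ := Complex.ofRealHom with hφ_def
    set S : Matrix (Fin N) (Fin N) ℝ := triS aa ap bb N with hS_def
    set W : Matrix (Fin N) (Fin N) ℝ := θ⁻¹ • triG aa ap bb N with hW_def
    set P : Matrix (Fin N) (Fin N) ℝ := ((K_R+1)/(1-α^2)) • triS (1+α^2) 1 (-α) N with hP_def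
    set R : Matrix (Fin N) (Fin N) ℝ := (1/(K_R+1)) • Tm α N with hR_def
    have hPR : P * R = 1 := by
      rw [hP_def, hR_def, Matrix.smul_mul, Matrix.mul_smul, triB_mul_Tm α hN,
          smul_smul, smul_smul]
      rw [show (K_R+1)/(1-α^2) * (1/(K_R+1)) * (1-α^2) = 1 by field_simp, one_smul]
    have hSW : S * W = 1 := by
      rw [hS_def, hW_def, Matrix.mul_smul, triS_mul_triG aa ap bb hN, smul_smul,
          inv_mul_cancel₀ hθ0.ne', one_smul]
    have hSP : S = P + γ • (1 : Matrix (Fin N) (Fin N) ℝ) := by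
      ext i j
      simp only [hS_def, hP_def, triS, Matrix.add_apply, Matrix.smul_apply, Matrix.of_apply,
        Matrix.one_apply, smul_eq_mul, haa_def, hap_def, hbb_def, Fin.ext_iff]
      split_ifs <;> first | (field_simp; ring1) | ring1 | (exfalso; omega)
    -- complex side
    set Rc : Matrix (Fin N) (Fin N) ℂ := pilotCorrMatrix K_R α N with hRc_def
    have hRpilot : R.map ⇑φ = Rc := by
      ext m n
      simp only [hR_def, hRc_def, Matrix.map_apply, Matrix.smul_apply, Tm, Tf,
        Matrix.of_apply, pilotCorrMatrix, smul_eq_mul, hφ_def, Complex.ofRealHom_eq_coe]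
      rw [show ((m:ℤ)-(n:ℤ)).natAbs = max (m:ℕ) (n:ℕ) - min (m:ℕ) (n:ℕ) by omega]
    set Pc : Matrix (Fin N) (Fin N) ℂ := P.map ⇑φ with hPc_def
    set Sc : Matrix (Fin N) (Fin N) ℂ := S.map ⇑φ with hSc_def
    set Wc : Matrix (Fin N) (Fin N) ℂ := W.map ⇑φ with hWc_def
    have hone : (1 : Matrix (Fin N) (Fin N) ℝ).map ⇑φ = 1 :=
      Matrix.map_one _ (map_zero φ) (map_one φ)
    have hPRc : Pc * Rc = 1 := by
      rw [hPc_def, ← hRpilot, ← Matrix.map_mul, hPR, hone]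
    have hRPc : Rc * Pc = 1 := mul_eq_one_comm.mp hPRc
    have hSWc : Sc * Wc = 1 := by
      rw [hSc_def, hWc_def, ← Matrix.map_mul, hSW, hone]
    have hWSc : Wc * Sc = 1 := mul_eq_one_comm.mp hSWc
    have hSPc : Sc = Pc + (γ:ℂ) • 1 := by
      rw [hSc_def, hSP]
      ext i j
      simp only [Matrix.map_apply, Matrix.add_apply, Matrix.smul_apply, Matrix.one_apply,
        smul_eq_mul, map_add, hφ_def, Complex.ofRealHom_eq_coe, Complex.ofReal_mul, apply_ite
          (fun x : ℝ => (x : ℂ)), Complex.ofReal_one, Complex.ofReal_zero, hPc_def]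
    have hcomm : Rc * Sc = Sc * Rc := by
      rw [hSPc, Matrix.mul_add, Matrix.add_mul, hRPc, hPRc, Matrix.mul_smul,
        Matrix.smul_mul, mul_one, one_mul]
    have hRW : Rc * Wc = Wc * Rc := by
      calc Rc * Wc = (Wc * Sc) * (Rc * Wc) := by rw [hWSc, one_mul]
        _ = Wc * ((Sc * Rc) * Wc) := by rw [mul_assoc, mul_assoc]
        _ = Wc * ((Rc * Sc) * Wc) := by rw [hcomm]
        _ = (Wc * Rc) * (Sc * Wc) := by rw [mul_assoc, mul_assoc]
        _ = Wc * Rc := by rw [hSWc, mul_one]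
    have e1 : Rc * (Wc * Pc) = Wc := by
      rw [← mul_assoc, hRW, mul_assoc, hRPc, mul_one]
    have hγγ : ((γ⁻¹ : ℝ) : ℂ) * (γ : ℂ) = 1 := by
      rw [← Complex.ofReal_mul, inv_mul_cancel₀ hγ.ne', Complex.ofReal_one]
    have hAinv : (Rc + ((γ⁻¹ : ℝ) : ℂ) • 1) * ((γ:ℂ) • (Wc * Pc)) = 1 := by
      calc (Rc + ((γ⁻¹ : ℝ) : ℂ) • 1) * ((γ:ℂ) • (Wc * Pc))
          = (γ:ℂ) • (Rc * (Wc * Pc)) + (((γ⁻¹ : ℝ) : ℂ) * (γ:ℂ)) • (Wc * Pc) := by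
            rw [Matrix.add_mul, Matrix.mul_smul, Matrix.smul_mul, one_mul, smul_smul]
        _ = (γ:ℂ) • Wc + Wc * Pc := by rw [e1, hγγ, one_smul]
        _ = Wc * Sc := by
            rw [hSPc, Matrix.mul_add, Matrix.mul_smul, mul_one, add_comm]
        _ = 1 := hWSc
    have hAeq : (Rc + ((γ⁻¹ : ℝ) : ℂ) • (1 : Matrix (Fin N) (Fin N) ℂ))⁻¹
        = (γ:ℂ) • (Wc * Pc) := Matrix.inv_eq_right_inv hAinv
    have e3 : Rc = Wc + (γ:ℂ) • (Wc * Rc) := by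
      have h1 : Wc * Pc + (γ:ℂ) • Wc = 1 := by
        rw [← hWSc, hSPc, Matrix.mul_add, Matrix.mul_smul, mul_one]
      calc Rc = (Wc * Pc + (γ:ℂ) • Wc) * Rc := by rw [h1, one_mul]
        _ = Wc * (Pc * Rc) + (γ:ℂ) • (Wc * Rc) := by
            rw [Matrix.add_mul, mul_assoc, Matrix.smul_mul]
        _ = Wc + (γ:ℂ) • (Wc * Rc) := by rw [hPRc, mul_one]
    have hE : Rc - Rc * (Rc + ((γ⁻¹ : ℝ) : ℂ) • 1)⁻¹ * Rc = Wc := by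
      rw [hAeq, Matrix.mul_smul, Matrix.smul_mul, e1]
      nth_rewrite 1 [e3]
      rw [add_sub_cancel_right]
    rw [hE]
    have htr : Matrix.trace Wc
        = Complex.ofReal (θ⁻¹ * ∑ i ∈ Finset.range N, psi aa ap bb i * psi aa ap bb (N-1-i)) := by
      have hG : ∀ i : Fin N, triG aa ap bb N i i = psi aa ap bb (i:ℕ) * psi aa ap bb (N-1-(i:ℕ)) := by
        intro i
        simp only [triG, Matrix.of_apply, Gf, max_self, min_self, Nat.sub_self, pow_zero, one_mul]
      rw [hWc_def]
      have h0 : Matrix.trace (W.map ⇑φ) = φ (Matrix.trace W) := by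
        simp [Matrix.trace, Matrix.diag, map_sum]
      rw [h0, hφ_def, Complex.ofRealHom_eq_coe]
      congr 1
      rw [hW_def, Matrix.trace]
      simp only [Matrix.diag_apply, Matrix.smul_apply, smul_eq_mul, hG]
      rw [← Finset.mul_sum]
      congr 1
      exact Fin.sum_univ_eq_sum_range (fun i => psi aa ap bb i * psi aa ap bb (N-1-i)) N
    rw [htr]
    have hNne : ((N:ℝ)) ≠ 0 := Nat.cast_ne_zero.mpr (by omega)
    rw [show ((N:ℂ)) = Complex.ofReal (N:ℝ) by push_cast; rfl]
    rw [← Complex.ofReal_one, ← Complex.ofReal_div, ← Complex.ofReal_mul]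
    congr 1
    field_simp
  refine Tendsto.congr' ?_ ((Complex.continuous_ofReal.tendsto _).comp htend)
  filter_upwards [eventually_ge_atTop 2] with N hN
  exact (hmain N hN).symm
end

section
/- Let K_R ≥ 0, γ > 0 and α ∈ (0,1), and define Λ(Ω) = (1/(K_R+1))·(1−α²)/(1−2α·cos Ω + α²). Then (1/(2π))·∫_{−π}^{π} Λ(Ω)/(γ·Λ(Ω)+1) dΩ = 1/√(γ² + 2γ·((1+α²)/(1−α²))·(K_R+1) + (K_R+1)²). -/
open Real intervalIntegral

lemma key_integral (a b : ℝ) (ha : 0 < a) (hab : a < b) :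
    ∫ x in (-Real.pi)..Real.pi, (b - a * Real.cos x)⁻¹
      = 2 * Real.pi / Real.sqrt (b ^ 2 - a ^ 2) := by
  set s := Real.sqrt (b ^ 2 - a ^ 2) with hs_def
  have hs2 : s ^ 2 = b ^ 2 - a ^ 2 := Real.sq_sqrt (by nlinarith)
  have hs : 0 < s := Real.sqrt_pos.2 (by nlinarith)
  have hpos : ∀ x : ℝ, 0 < b - a * Real.cos x := by
    intro x
    nlinarith [Real.cos_le_one x, Real.neg_one_le_cos x]
  have hD : ∀ x : ℝ, 0 < b + s - a * Real.cos x := by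
    intro x; have := hpos x; linarith
  set F : ℝ → ℝ := fun x =>
    (x + 2 * Real.arctan (a * Real.sin x / (b + s - a * Real.cos x))) / s with hF
  have hderiv : ∀ x : ℝ, HasDerivAt F ((b - a * Real.cos x)⁻¹) x := by
    intro x
    have h1 : HasDerivAt (fun x => a * Real.sin x) (a * Real.cos x) x :=
      (Real.hasDerivAt_sin x).const_mul a
    have h2 : HasDerivAt (fun x => b + s - a * Real.cos x) (a * Real.sin x) x := by
      have := ((Real.hasDerivAt_cos x).const_mul a).const_sub (b + s)
      simpa using this
    have hu := h1.div h2 (ne_of_gt (hD x))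
    have harc := hu.arctan
    have hsum := ((hasDerivAt_id x).add (harc.const_mul 2)).div_const s
    convert hsum using 1
    case e'_4 => rfl
    case e'_5 => rfl
    case e'_8 => rfl
    set c := Real.cos x
    set sn := Real.sin x with hsn
    have hsc : sn ^ 2 + c ^ 2 = 1 := Real.sin_sq_add_cos_sq x
    have hDx := hD x; have hpx := hpos x
    set D := b + s - a * c with hDdef
    set P := b - a * c with hP
    have h1pu : 1 + (a * sn / D) ^ 2 = 2 * (b + s) * P / D ^ 2 := by
      field_simp
      linear_combination hs2 + a ^ 2 * hsc
    show P⁻¹ = (1 + 2 * (1 / (1 + (a * sn / D) ^ 2) * ((a * c * D - a * sn * (a * sn)) / D ^ 2))) / s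
    rw [h1pu]
    have hbs : 0 < b + s := by linarith
    set N := a * c * D - a * sn * (a * sn) with hN
    have h3 : (b + s) * P + N = s * (s + b) := by
      rw [hN, hDdef, hP]; linear_combination -hs2 - a ^ 2 * hsc
    have e4 : (1 + 2 * (1 / (2 * (b + s) * P / D ^ 2) * (N / D ^ 2))) / s
        = ((b + s) * P + N) / ((b + s) * P * s) := by
      field_simp
    rw [e4, h3]
    field_simp
    ring
  have hint : IntervalIntegrable (fun x => (b - a * Real.cos x)⁻¹)
      MeasureTheory.volume (-Real.pi) Real.pi := by
    apply Continuous.intervalIntegrable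
    exact (continuous_const.sub (continuous_const.mul Real.continuous_cos)).inv₀
      (fun x => ne_of_gt (hpos x))
  rw [intervalIntegral.integral_eq_sub_of_hasDerivAt (fun x _ => hderiv x) hint]
  simp only [hF, Real.sin_pi, Real.sin_neg, Real.cos_pi, Real.cos_neg, neg_zero]
  rw [show a * 0 = 0 by ring]
  simp [Real.arctan_zero]
  field_simp
  ring

lemma aux_div (A D g : ℝ) (hD : D ≠ 0) (h : g * A + D ≠ 0) :
    (A / D) / (g * (A / D) + 1) = A * (g * A + D)⁻¹ := by
  field_simp

/-- Theorem 1 (analytic core): for `K_R ≥ 0`, `γ > 0`, `α ∈ (0,1)`, with power spectrum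
`Λ(Ω) = (1/(K_R+1))·(1-α²)/(1-2α cos Ω + α²)`, one has
`(1/(2π)) ∫_{-π}^{π} Λ(Ω)/(γΛ(Ω)+1) dΩ = 1/√(γ² + 2γ((1+α²)/(1-α²))(K_R+1) + (K_R+1)²)`. -/
theorem asymptotic_mse_pilot_integral (K_R γ α : ℝ) (hK : 0 ≤ K_R) (hγ : 0 < γ)
    (hα : α ∈ Set.Ioo (0 : ℝ) 1) :
    (1 / (2 * Real.pi)) * ∫ Ω in (-Real.pi)..Real.pi,
        (fun Λ : ℝ => Λ / (γ * Λ + 1))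
          ((1 / (K_R + 1)) * (1 - α ^ 2) / (1 - 2 * α * Real.cos Ω + α ^ 2))
      = 1 / Real.sqrt (γ ^ 2 + 2 * γ * ((1 + α ^ 2) / (1 - α ^ 2)) * (K_R + 1)
          + (K_R + 1) ^ 2) := by
  obtain ⟨hα0, hα1⟩ := hα
  have hK1 : 0 < K_R + 1 := by linarith
  have h1a : 0 < 1 - α ^ 2 := by nlinarith
  set A : ℝ := 1 / (K_R + 1) * (1 - α ^ 2) with hA_def
  have hA : 0 < A := by positivity
  set a : ℝ := 2 * α with ha_def
  set b : ℝ := 1 + α ^ 2 + γ * A with hb_def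
  have ha : 0 < a := by positivity
  have hab : a < b := by nlinarith [mul_pos hγ hA]
  have hDpos : ∀ Ω : ℝ, 0 < 1 - 2 * α * Real.cos Ω + α ^ 2 := by
    intro Ω
    nlinarith [Real.cos_le_one Ω, sq_nonneg (1 - α)]
  have hcong : ∀ Ω : ℝ,
      (fun Λ : ℝ => Λ / (γ * Λ + 1))
          ((1 / (K_R + 1)) * (1 - α ^ 2) / (1 - 2 * α * Real.cos Ω + α ^ 2))
        = A * (b - a * Real.cos Ω)⁻¹ := by
    intro Ω
    have hD := hDpos Ω
    have hb2 : 0 < b - a * Real.cos Ω := by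
      have : b - a * Real.cos Ω = γ * A + (1 - 2 * α * Real.cos Ω + α ^ 2) := by
        rw [hb_def, ha_def]; ring
      rw [this]; positivity
    simp only
    have e : b - a * Real.cos Ω = γ * A + (1 - 2 * α * Real.cos Ω + α ^ 2) := by
      rw [hb_def, ha_def]; ring
    have h2 : γ * A + (1 - 2 * α * Real.cos Ω + α ^ 2) ≠ 0 := by positivity
    rw [e, div_div, ← div_div, aux_div A _ γ (ne_of_gt hD) h2]
  rw [intervalIntegral.integral_congr (fun Ω _ => hcong Ω),
    intervalIntegral.integral_const_mul, key_integral a b ha hab]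
  have hY : 0 < γ ^ 2 + 2 * γ * ((1 + α ^ 2) / (1 - α ^ 2)) * (K_R + 1) + (K_R + 1) ^ 2 := by
    positivity
  have hXY : b ^ 2 - a ^ 2
      = A ^ 2 * (γ ^ 2 + 2 * γ * ((1 + α ^ 2) / (1 - α ^ 2)) * (K_R + 1) + (K_R + 1) ^ 2) := by
    rw [hb_def, ha_def, hA_def]
    field_simp
    ring
  rw [hXY, Real.sqrt_mul (sq_nonneg A), Real.sqrt_sq hA.le]
  have hπ := Real.pi_pos
  have hsY : 0 < Real.sqrt (γ ^ 2 + 2 * γ * ((1 + α ^ 2) / (1 - α ^ 2)) * (K_R + 1)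
      + (K_R + 1) ^ 2) := Real.sqrt_pos.2 hY
  field_simp
end

section
/- Let α ∈ (0,1), t ∈ (0,1), β = α^t, and Ω ∈ ℝ. The doubly infinite series ∑_{k ∈ ℤ} α^{|k+t|}·e^{−ikΩ} converges absolutely and its sum equals (α(β⁻¹−β)·e^{iΩ} + β − α²β⁻¹)/(1−2α·cos Ω + α²). -/
lemma key_identity (a β bi z w : ℂ) (hβ : β * bi = 1) (hzw : z * w = 1)
    (h1 : 1 - a*z ≠ 0) (h2 : 1 - a*w ≠ 0) :
    β * (1 - a*w)⁻¹ + (a * bi * z) * (1 - a*z)⁻¹ =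
      (a*(bi - β) * z + β - a^2*bi) / ((1-a*z)*(1-a*w)) := by
  have hz0 : z ≠ 0 := left_ne_zero_of_mul_eq_one hzw
  have hβ0 : β ≠ 0 := left_ne_zero_of_mul_eq_one hβ
  have hw : w = z⁻¹ := eq_inv_of_mul_eq_one_left (by linear_combination hzw)
  have hbi : bi = β⁻¹ := eq_inv_of_mul_eq_one_left (by linear_combination hβ)
  subst hw hbi
  have he : 1 - a * z⁻¹ = (z - a) * z⁻¹ := by field_simp
  have h2' : z - a ≠ 0 := fun h => h2 (by rw [he, h, zero_mul])
  rw [he]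
  generalize hu : 1 - a*z = u at h1 ⊢
  field_simp
  rw [← hu]
  ring

/-- The discrete-time Fourier transform of the shifted exponential correlation sequence:
for `α ∈ (0,1)`, `t ∈ (0,1)`, `β = α^t` and `Ω ∈ ℝ`, the doubly infinite series
`∑_{k ∈ ℤ} α^{|k+t|} e^{-ikΩ}` converges absolutely and sums to
`(α(β⁻¹-β) e^{iΩ} + β - α²β⁻¹)/(1-2α cos Ω + α²)`. -/
theorem dtft_shifted_exponential_sequence (α t Ω : ℝ) (hα : α ∈ Set.Ioo (0 : ℝ) 1)
    (ht : t ∈ Set.Ioo (0 : ℝ) 1) :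
    Summable (fun k : ℤ =>
        ‖((α ^ |(k : ℝ) + t| : ℝ) : ℂ) * Complex.exp (-Complex.I * (k : ℂ) * (Ω : ℂ))‖) ∧
    ∑' k : ℤ, ((α ^ |(k : ℝ) + t| : ℝ) : ℂ) * Complex.exp (-Complex.I * (k : ℂ) * (Ω : ℂ))
      = (((α * ((α ^ t)⁻¹ - α ^ t) : ℝ) : ℂ) * Complex.exp (Complex.I * (Ω : ℂ))
            + ((α ^ t : ℝ) : ℂ) - ((α ^ 2 * (α ^ t)⁻¹ : ℝ) : ℂ))
          / (((1 - 2 * α * Real.cos Ω + α ^ 2 : ℝ)) : ℂ) := by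
  obtain ⟨hα0, hα1⟩ := hα
  obtain ⟨ht0, ht1⟩ := ht
  set z : ℂ := Complex.exp (Complex.I * Ω) with hz
  set w : ℂ := Complex.exp (-Complex.I * Ω) with hw
  set f : ℤ → ℂ := fun k =>
    ((α ^ |(k : ℝ) + t| : ℝ) : ℂ) * Complex.exp (-Complex.I * (k : ℂ) * (Ω : ℂ)) with hf
  -- basic facts
  have hzw : z * w = 1 := by
    rw [hz, hw, ← Complex.exp_add]
    norm_num [Complex.exp_zero]
  have hnz : ‖z‖ = 1 := by
    simp [hz, Complex.norm_exp]
  have hnw : ‖w‖ = 1 := by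
    simp [hw, Complex.norm_exp]
  have hαz : ‖(α : ℂ) * z‖ < 1 := by
    rw [norm_mul, hnz, Complex.norm_real]
    simp [abs_of_pos hα0, hα1]
  have hαw : ‖(α : ℂ) * w‖ < 1 := by
    rw [norm_mul, hnw, Complex.norm_real]
    simp [abs_of_pos hα0, hα1]
  have h1 : 1 - (α : ℂ) * z ≠ 0 := by
    intro h
    rw [sub_eq_zero] at h
    have := congrArg norm h
    simp only [norm_one] at this
    rw [← this] at hαz
    exact lt_irrefl _ hαz
  have h2 : 1 - (α : ℂ) * w ≠ 0 := by
    intro h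
    rw [sub_eq_zero] at h
    have := congrArg norm h
    simp only [norm_one] at this
    rw [← this] at hαw
    exact lt_irrefl _ hαw
  -- nonneg part
  have hfn : ∀ n : ℕ, f (n : ℤ) = ((α ^ t : ℝ) : ℂ) * ((α : ℂ) * w) ^ n := by
    intro n
    have habs : α ^ |(n : ℝ) + t| = α ^ t * α ^ n := by
      rw [abs_of_nonneg (by positivity), Real.rpow_add hα0, Real.rpow_natCast, mul_comm]
    have hexp : Complex.exp (-Complex.I * (n : ℂ) * (Ω : ℂ)) = w ^ n := by
      rw [hw, ← Complex.exp_nat_mul]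
      congr 1
      ring
    rw [hf]
    simp only [Int.cast_natCast]
    rw [habs, hexp]
    push_cast
    ring
  have hfneg : ∀ n : ℕ, f (-((n : ℤ) + 1)) =
      (((α ^ (1 - t) : ℝ) : ℂ) * z) * ((α : ℂ) * z) ^ n := by
    intro n
    have habs : α ^ |(-((n : ℝ) + 1)) + t| = α ^ (1 - t) * α ^ n := by
      rw [abs_of_nonpos (by nlinarith), show -(-((n : ℝ) + 1) + t) = (1 - t) + n by ring,
        Real.rpow_add hα0, Real.rpow_natCast]
    have hexp : Complex.exp (-Complex.I * (-((n : ℂ) + 1)) * (Ω : ℂ)) = z * z ^ n := by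
      rw [hz, ← Complex.exp_nat_mul, ← Complex.exp_add]
      congr 1
      ring
    rw [hf]
    simp only [Int.cast_neg, Int.cast_add, Int.cast_natCast, Int.cast_one]
    rw [habs, hexp]
    push_cast
    ring
  have hsum1 : HasSum (fun n : ℕ => f (n : ℤ))
      (((α ^ t : ℝ) : ℂ) * (1 - (α : ℂ) * w)⁻¹) :=
    ((hasSum_geometric_of_norm_lt_one hαw).mul_left ((α ^ t : ℝ) : ℂ)).congr_fun hfn
  have hsum2 : HasSum (fun n : ℕ => f (-((n : ℤ) + 1)))
      ((((α ^ (1 - t) : ℝ) : ℂ) * z) * (1 - (α : ℂ) * z)⁻¹) :=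
    ((hasSum_geometric_of_norm_lt_one hαz).mul_left
      (((α ^ (1 - t) : ℝ) : ℂ) * z)).congr_fun hfneg
  have hsum : HasSum f (((α ^ t : ℝ) : ℂ) * (1 - (α : ℂ) * w)⁻¹
      + (((α ^ (1 - t) : ℝ) : ℂ) * z) * (1 - (α : ℂ) * z)⁻¹) :=
    HasSum.of_nat_of_neg_add_one hsum1 hsum2
  have hnorm1 : ∀ n : ℕ, ‖f (n : ℤ)‖ = α ^ t * α ^ n := by
    intro n
    rw [hfn n, norm_mul, norm_pow, norm_mul, hnw, Complex.norm_real, Complex.norm_real,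
      Real.norm_eq_abs, Real.norm_eq_abs, abs_of_nonneg (Real.rpow_nonneg hα0.le _),
      abs_of_pos hα0, mul_one]
  have hnorm2 : ∀ n : ℕ, ‖f (-((n : ℤ) + 1))‖ = α ^ (1 - t) * α ^ n := by
    intro n
    rw [hfneg n]
    simp only [norm_mul, norm_pow, hnz, mul_one, Complex.norm_real, Real.norm_eq_abs]
    rw [abs_of_nonneg (Real.rpow_nonneg hα0.le _), abs_of_pos hα0]
  constructor
  · -- summability of norms
    apply Summable.of_nat_of_neg_add_one
    · exact (((summable_geometric_of_lt_one hα0.le hα1).mul_left (α ^ t))).congr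
        fun n => (hnorm1 n).symm
    · exact (((summable_geometric_of_lt_one hα0.le hα1).mul_left (α ^ (1 - t)))).congr
        fun n => (hnorm2 n).symm
  · -- the sum value
    rw [hsum.tsum_eq]
    have hβbi : ((α ^ t : ℝ) : ℂ) * ((α ^ t : ℝ)⁻¹ : ℝ) = 1 := by
      push_cast
      rw [mul_inv_cancel₀]
      exact_mod_cast (Real.rpow_pos_of_pos hα0 t).ne'
    have hα1t : ((α ^ (1 - t) : ℝ) : ℂ) = (α : ℂ) * ((α ^ t : ℝ)⁻¹ : ℝ) := by
      rw [Real.rpow_sub hα0, Real.rpow_one]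
      push_cast
      ring
    have hcos : z + w = 2 * Complex.cos (Ω : ℂ) := by
      rw [Complex.cos, hz, hw]
      rw [show ((Ω : ℂ)) * Complex.I = Complex.I * Ω by ring,
        show -(Ω : ℂ) * Complex.I = -Complex.I * Ω by ring]
      ring
    have hD : (((1 - 2 * α * Real.cos Ω + α ^ 2 : ℝ)) : ℂ)
        = (1 - (α : ℂ) * z) * (1 - (α : ℂ) * w) := by
      push_cast
      linear_combination ((α : ℂ)) * hcos - ((α : ℂ))^2 * hzw
    rw [hD, hα1t]
    have hkey := key_identity ((α : ℂ)) ((α ^ t : ℝ) : ℂ) (((α ^ t : ℝ)⁻¹ : ℝ) : ℂ) z w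
      hβbi hzw h1 h2
    rw [mul_assoc] at hkey ⊢
    rw [hkey]
    push_cast
    ring_nf
end

section
/- Let K_R ≥ 0, γ > 0, α ∈ (0,1), t ∈ (0,1) and β = α^t, and define Λ(Ω) = (1/(K_R+1))·(1−α²)/(1−2α·cos Ω + α²) and Λ_dh(Ω) = (1/(K_R+1))·(α(β⁻¹−β)·e^{iΩ} + β − α²β⁻¹)/(1−2α·cos Ω + α²). Then (1/(2π))·∫_{−π}^{π} [Λ(Ω) − |Λ_dh(Ω)|²/(Λ(Ω) + 1/γ)] dΩ = 1/√(γ² + 2γ·((1+α²)/(1−α²))·(K_R+1) + (K_R+1)²) + (1/(2π))·∫_{−π}^{π} (Λ(Ω)² − |Λ_dh(Ω)|²)/(Λ(Ω) + 1/γ) dΩ. -/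
open Real

lemma poisson_integral (a b : ℝ) (hb : 0 < b) (hab : b < a) :
    ∫ Ω in (-Real.pi)..Real.pi, (a - b * Real.cos Ω)⁻¹
      = 2 * Real.pi / Real.sqrt (a ^ 2 - b ^ 2) := by
  have ha : 0 < a := hb.trans hab
  have hs2 : (0:ℝ) < a ^ 2 - b ^ 2 := by nlinarith
  set s : ℝ := Real.sqrt (a ^ 2 - b ^ 2) with hs_def
  have hs : 0 < s := Real.sqrt_pos.mpr hs2
  have hssq : s ^ 2 = a ^ 2 - b ^ 2 := Real.sq_sqrt hs2.le
  set q : ℝ := (a - s) / b with hq_def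
  have hsa : s < a := by nlinarith [hssq, hs]
  have hq0 : 0 < q := div_pos (by linarith) hb
  have hq1 : q < 1 := by
    rw [div_lt_one hb]; nlinarith [hssq]
  have hq : q * b = a - s := by rw [hq_def]; field_simp
  clear_value q
  have hden : ∀ Ω : ℝ, 0 < 1 - q * Real.cos Ω := fun Ω => by
    nlinarith [Real.cos_le_one Ω, Real.neg_one_le_cos Ω]
  have habc : ∀ Ω : ℝ, 0 < a - b * Real.cos Ω := fun Ω => by
    nlinarith [Real.cos_le_one Ω]
  set F : ℝ → ℝ := fun Ω => s⁻¹ * (Ω + 2 * Real.arctan (q * Real.sin Ω / (1 - q * Real.cos Ω)))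
    with hF_def
  have hderiv : ∀ Ω : ℝ, HasDerivAt F (a - b * Real.cos Ω)⁻¹ Ω := by
    intro Ω
    have h1 : HasDerivAt (fun x : ℝ => q * Real.sin x) (q * Real.cos Ω) Ω :=
      (Real.hasDerivAt_sin Ω).const_mul q
    have h2 : HasDerivAt (fun x : ℝ => 1 - q * Real.cos x) (q * Real.sin Ω) Ω := by
      simpa using ((Real.hasDerivAt_cos Ω).const_mul q).const_sub 1
    have h3 := h1.div h2 (hden Ω).ne'
    have h4 := h3.arctan
    have h6 : HasDerivAt F
        (s⁻¹ * (1 + 2 * (1 / (1 + (q * Real.sin Ω / (1 - q * Real.cos Ω)) ^ 2) *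
          ((q * Real.cos Ω * (1 - q * Real.cos Ω) - q * Real.sin Ω * (q * Real.sin Ω)) /
            (1 - q * Real.cos Ω) ^ 2)))) Ω :=
      ((hasDerivAt_id Ω).add (h4.const_mul 2)).const_mul s⁻¹
    convert h6 using 1
    have hd := (hden Ω).ne'
    have hD : (0:ℝ) < 1 - 2 * q * Real.cos Ω + q ^ 2 := by
      nlinarith [Real.cos_le_one Ω, Real.neg_one_le_cos Ω, hq0, hq1]
    have hsin : Real.sin Ω ^ 2 = 1 - Real.cos Ω ^ 2 := by
      nlinarith [Real.sin_sq_add_cos_sq Ω]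
    have key2 : b ^ 2 * ((1 - q ^ 2) * (a - b * Real.cos Ω))
        = b ^ 2 * (s * (1 - 2 * q * Real.cos Ω + q ^ 2)) := by
      linear_combination
        (-b * (a - b * Real.cos Ω + s) * q + 2 * s * b * Real.cos Ω
          - (a - b * Real.cos Ω + s) * (a - s)) * hq
        + (a - b * Real.cos Ω - s) * hssq
    have key : (1 - q ^ 2) * (a - b * Real.cos Ω)
        = s * (1 - 2 * q * Real.cos Ω + q ^ 2) :=
      mul_left_cancel₀ (pow_ne_zero 2 hb.ne') key2
    have e1 : 1 + (q * Real.sin Ω / (1 - q * Real.cos Ω)) ^ 2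
        = (1 - 2 * q * Real.cos Ω + q ^ 2) / (1 - q * Real.cos Ω) ^ 2 := by
      field_simp
      linear_combination q ^ 2 * hsin
    have e2 : q * Real.cos Ω * (1 - q * Real.cos Ω) - q * Real.sin Ω * (q * Real.sin Ω)
        = q * Real.cos Ω - q ^ 2 := by
      linear_combination (-q ^ 2) * hsin
    rw [e1, e2]
    have e3 : 1 / ((1 - 2 * q * Real.cos Ω + q ^ 2) / (1 - q * Real.cos Ω) ^ 2)
        * ((q * Real.cos Ω - q ^ 2) / (1 - q * Real.cos Ω) ^ 2)
        = (q * Real.cos Ω - q ^ 2) / (1 - 2 * q * Real.cos Ω + q ^ 2) := by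
      rw [one_div, inv_div]
      field_simp
    rw [e3]
    rw [eq_comm]
    have hA := (habc Ω).ne'
    field_simp
    rw [eq_div_iff (by rw [mul_comm]; exact hA)]
    linear_combination key
  have hint : IntervalIntegrable (fun Ω => (a - b * Real.cos Ω)⁻¹) MeasureTheory.volume
      (-Real.pi) Real.pi :=
    (((continuous_const.sub (continuous_const.mul Real.continuous_cos)).inv₀
      (fun Ω => (habc Ω).ne'))).intervalIntegrable _ _
  rw [intervalIntegral.integral_eq_sub_of_hasDerivAt (fun Ω _ => hderiv Ω) hint]
  simp only [hF_def, Real.sin_pi, Real.cos_pi, Real.sin_neg, Real.cos_neg,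
    mul_zero, zero_div, Real.arctan_zero, neg_zero]
  rw [div_eq_mul_inv]
  ring



lemma pilot_aux (P D G : ℝ) (hP : 0 < P) (hD : 0 < D) (hG : 0 < G) :
    P / D - (P / D) ^ 2 / (P / D + 1 / G) = P * (G * P + D)⁻¹ := by
  have h1 : (0:ℝ) < G * P + D := by positivity
  have h2 : P / D + 1 / G = (G * P + D) / (G * D) := by field_simp
  rw [h2]
  field_simp
  ring

/-- The power spectrum `Λ(Ω) = (1/(K_R+1))·(1-α²)/(1-2α cos Ω + α²)`. -/
noncomputable def powSpec (K_R α Ω : ℝ) : ℝ :=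
  (1 / (K_R + 1)) * (1 - α ^ 2) / (1 - 2 * α * Real.cos Ω + α ^ 2)

/-- The cross power spectrum
`Λ_dh(Ω) = (1/(K_R+1))·(α(β⁻¹-β)e^{iΩ} + β - α²β⁻¹)/(1-2α cos Ω + α²)` with `β = α^t`. -/
noncomputable def crossPowSpec (K_R α t Ω : ℝ) : ℂ :=
  (((1 / (K_R + 1)) : ℝ) : ℂ) *
    ((((α * ((α ^ t)⁻¹ - α ^ t) : ℝ) : ℂ) * Complex.exp (Complex.I * (Ω : ℂ))
        + ((α ^ t : ℝ) : ℂ) - ((α ^ 2 * (α ^ t)⁻¹ : ℝ) : ℂ))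
      / (((1 - 2 * α * Real.cos Ω + α ^ 2 : ℝ)) : ℂ))

set_option maxHeartbeats 1000000 in
/-- Equation (38) in Appendix B combined with the closed form of Theorem 1: the
data-location MSE integral splits into the pilot-location MSE `σ_p²` plus a correction term:
`(1/(2π)) ∫ [Λ - |Λ_dh|²/(Λ + 1/γ)] dΩ
  = 1/√(γ² + 2γ((1+α²)/(1-α²))(K_R+1) + (K_R+1)²)
    + (1/(2π)) ∫ (Λ² - |Λ_dh|²)/(Λ + 1/γ) dΩ`. -/

theorem mse_data_locations_split (K_R γ α t : ℝ) (hK : 0 ≤ K_R) (hγ : 0 < γ)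
    (hα : α ∈ Set.Ioo (0 : ℝ) 1) (ht : t ∈ Set.Ioo (0 : ℝ) 1) :
    (1 / (2 * Real.pi)) * ∫ Ω in (-Real.pi)..Real.pi,
        (powSpec K_R α Ω
          - ‖crossPowSpec K_R α t Ω‖ ^ 2 / (powSpec K_R α Ω + 1 / γ))
      = 1 / Real.sqrt (γ ^ 2 + 2 * γ * ((1 + α ^ 2) / (1 - α ^ 2)) * (K_R + 1)
            + (K_R + 1) ^ 2)
        + (1 / (2 * Real.pi)) * ∫ Ω in (-Real.pi)..Real.pi,
            ((powSpec K_R α Ω) ^ 2 - ‖crossPowSpec K_R α t Ω‖ ^ 2)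
              / (powSpec K_R α Ω + 1 / γ) := by
  obtain ⟨hα0, hα1⟩ := hα
  have hK1 : (0:ℝ) < K_R + 1 := by linarith
  have h1α : (0:ℝ) < 1 - α ^ 2 := by nlinarith
  have hc : (0:ℝ) < 1 / (K_R + 1) := by positivity
  have hP : (0:ℝ) < 1 / (K_R + 1) * (1 - α ^ 2) := mul_pos hc h1α
  have hD : ∀ Ω : ℝ, 0 < 1 - 2 * α * Real.cos Ω + α ^ 2 := fun Ω => by
    nlinarith [Real.cos_le_one Ω, Real.neg_one_le_cos Ω]
  have hps : ∀ Ω : ℝ, powSpec K_R α Ω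
      = (1 / (K_R + 1) * (1 - α ^ 2)) / (1 - 2 * α * Real.cos Ω + α ^ 2) := fun Ω => rfl
  have hfpos : ∀ Ω : ℝ, 0 < powSpec K_R α Ω := fun Ω => by
    rw [hps]; exact div_pos hP (hD Ω)
  have hd : ∀ Ω : ℝ, 0 < powSpec K_R α Ω + 1 / γ := fun Ω =>
    add_pos (hfpos Ω) (by positivity)
  -- continuity facts
  have hfcont : Continuous (fun Ω => powSpec K_R α Ω) := by
    simp only [hps]
    exact continuous_const.div (by continuity) (fun Ω => (hD Ω).ne')
  have hgcont : Continuous (fun Ω => ‖crossPowSpec K_R α t Ω‖ ^ 2) := by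
    apply Continuous.pow
    apply continuous_norm.comp
    unfold crossPowSpec
    apply Continuous.mul continuous_const
    apply Continuous.div
    · continuity
    · continuity
    · intro Ω
      exact_mod_cast (hD Ω).ne'
  set A : ℝ := 1 + α ^ 2 + γ * (1 / (K_R + 1) * (1 - α ^ 2)) with hA_def
  have hsq : (0:ℝ) ≤ 1 - 2 * α + α ^ 2 := by nlinarith [sq_nonneg (1 - α)]
  have hbA : 2 * α < A := by
    rw [hA_def]; linarith [mul_pos hγ hP]
  -- the pilot integrand identity
  have hpilot : ∀ Ω : ℝ, powSpec K_R α Ω - (powSpec K_R α Ω) ^ 2 / (powSpec K_R α Ω + 1 / γ)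
      = 1 / (K_R + 1) * (1 - α ^ 2) * (A - 2 * α * Real.cos Ω)⁻¹ := by
    intro Ω
    rw [hps]
    rw [pilot_aux _ _ γ hP (hD Ω) hγ]
    have e : A - 2 * α * Real.cos Ω
        = γ * (1 / (K_R + 1) * (1 - α ^ 2)) + (1 - 2 * α * Real.cos Ω + α ^ 2) := by
      rw [hA_def]; ring
    rw [e]
  -- pointwise split
  have hsplit : ∀ Ω : ℝ, powSpec K_R α Ω
        - ‖crossPowSpec K_R α t Ω‖ ^ 2 / (powSpec K_R α Ω + 1 / γ)
      = (powSpec K_R α Ω - (powSpec K_R α Ω) ^ 2 / (powSpec K_R α Ω + 1 / γ))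
        + ((powSpec K_R α Ω) ^ 2 - ‖crossPowSpec K_R α t Ω‖ ^ 2)
            / (powSpec K_R α Ω + 1 / γ) := by
    intro Ω
    have h2 := (hd Ω).ne'
    field_simp
    ring
  -- integrability
  have hi1 : IntervalIntegrable
      (fun Ω => powSpec K_R α Ω - (powSpec K_R α Ω) ^ 2 / (powSpec K_R α Ω + 1 / γ))
      MeasureTheory.volume (-Real.pi) Real.pi :=
    (hfcont.sub ((hfcont.pow 2).div (hfcont.add continuous_const)
      (fun Ω => (hd Ω).ne'))).intervalIntegrable _ _
  have hi2 : IntervalIntegrable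
      (fun Ω => ((powSpec K_R α Ω) ^ 2 - ‖crossPowSpec K_R α t Ω‖ ^ 2)
        / (powSpec K_R α Ω + 1 / γ))
      MeasureTheory.volume (-Real.pi) Real.pi :=
    (((hfcont.pow 2).sub hgcont).div (hfcont.add continuous_const)
      (fun Ω => (hd Ω).ne')).intervalIntegrable _ _
  -- split the integral
  have hIsplit : (∫ Ω in (-Real.pi)..Real.pi, (powSpec K_R α Ω
        - ‖crossPowSpec K_R α t Ω‖ ^ 2 / (powSpec K_R α Ω + 1 / γ)))
      = (∫ Ω in (-Real.pi)..Real.pi,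
          (powSpec K_R α Ω - (powSpec K_R α Ω) ^ 2 / (powSpec K_R α Ω + 1 / γ)))
        + ∫ Ω in (-Real.pi)..Real.pi,
            ((powSpec K_R α Ω) ^ 2 - ‖crossPowSpec K_R α t Ω‖ ^ 2)
              / (powSpec K_R α Ω + 1 / γ) := by
    rw [← intervalIntegral.integral_add hi1 hi2]
    exact intervalIntegral.integral_congr (fun Ω _ => hsplit Ω)
  -- evaluate the pilot integral
  have hpilotI : (∫ Ω in (-Real.pi)..Real.pi,
        (powSpec K_R α Ω - (powSpec K_R α Ω) ^ 2 / (powSpec K_R α Ω + 1 / γ)))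
      = 1 / (K_R + 1) * (1 - α ^ 2)
        * (2 * Real.pi / Real.sqrt (A ^ 2 - (2 * α) ^ 2)) := by
    rw [intervalIntegral.integral_congr (fun Ω _ => hpilot Ω),
      intervalIntegral.integral_const_mul, poisson_integral A (2 * α) (by linarith) hbA]
  -- closed-form algebra
  set E : ℝ := γ ^ 2 + 2 * γ * ((1 + α ^ 2) / (1 - α ^ 2)) * (K_R + 1) + (K_R + 1) ^ 2
    with hE_def
  have hE : 0 < E := by
    have h' : 0 < (1 + α ^ 2) / (1 - α ^ 2) := by positivity
    positivity
  have hEeq : A ^ 2 - (2 * α) ^ 2 = (1 / (K_R + 1) * (1 - α ^ 2)) ^ 2 * E := by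
    rw [hA_def, hE_def]
    field_simp
    ring
  have hsqrt : Real.sqrt (A ^ 2 - (2 * α) ^ 2)
      = 1 / (K_R + 1) * (1 - α ^ 2) * Real.sqrt E := by
    rw [hEeq, Real.sqrt_mul (sq_nonneg _), Real.sqrt_sq hP.le]
  have hsE : 0 < Real.sqrt E := Real.sqrt_pos.mpr hE
  rw [hIsplit, mul_add, hpilotI, hsqrt]
  congr 1
  field_simp
end

section
/- Let α ∈ (0,1), t ∈ [0,1] and β = α^t. Then for every Ω ∈ ℝ, |α(β⁻¹−β)·e^{iΩ} + β − α²β⁻¹| ≤ 1 − α². Consequently, with Λ(Ω) = (1/(K_R+1))·(1−α²)/(1−2α·cos Ω + α²) and Λ_dh(Ω) = (1/(K_R+1))·(α(β⁻¹−β)·e^{iΩ} + β − α²β⁻¹)/(1−2α·cos Ω + α²) for K_R ≥ 0, one has |Λ_dh(Ω)| ≤ Λ(Ω) for all Ω. -/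
/-- Pointwise bound on the cross power spectrum: for `α ∈ (0,1)`, `t ∈ [0,1]`, `β = α^t`,
the numerator satisfies `|α(β⁻¹-β)e^{iΩ} + β - α²β⁻¹| ≤ 1 - α²` for every `Ω`, and
consequently `|Λ_dh(Ω)| ≤ Λ(Ω)` for every `Ω` (for any Rician factor `K_R ≥ 0`). -/
theorem crossPowSpec_abs_le_powSpec (α t : ℝ) (hα : α ∈ Set.Ioo (0 : ℝ) 1)
    (ht : t ∈ Set.Icc (0 : ℝ) 1) (K_R : ℝ) (hK : 0 ≤ K_R) :
    (∀ Ω : ℝ,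
      ‖((((α * ((α ^ t)⁻¹ - α ^ t) : ℝ) : ℂ) * Complex.exp (Complex.I * (Ω : ℂ))
          + ((α ^ t : ℝ) : ℂ) - ((α ^ 2 * (α ^ t)⁻¹ : ℝ) : ℂ)))‖ ≤ 1 - α ^ 2) ∧
    (∀ Ω : ℝ, ‖crossPowSpec K_R α t Ω‖ ≤ powSpec K_R α Ω) := by
  obtain ⟨hα0, hα1⟩ := hα
  obtain ⟨ht0, ht1⟩ := ht
  set β : ℝ := α ^ t with hβ
  have hβpos : 0 < β := Real.rpow_pos_of_pos hα0 t
  have hβle1 : β ≤ 1 := Real.rpow_le_one hα0.le hα1.le ht0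
  have hαleβ : α ≤ β := by
    have := Real.rpow_le_rpow_of_exponent_ge hα0 hα1.le ht1
    simpa using this
  -- nonnegativity of the two numerator pieces
  have hββ : β * β⁻¹ = 1 := mul_inv_cancel₀ hβpos.ne'
  have hβinv : 0 < β⁻¹ := inv_pos.mpr hβpos
  have hinv1 : 1 ≤ β⁻¹ := by nlinarith
  have h1 : 0 ≤ α * (β⁻¹ - β) := mul_nonneg hα0.le (by nlinarith)
  have h2 : 0 ≤ β - α ^ 2 * β⁻¹ := by nlinarith [mul_le_mul hαleβ hαleβ hα0.le hβpos.le]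
  have hsum : α * (β⁻¹ - β) + (β - α ^ 2 * β⁻¹) ≤ 1 - α ^ 2 := by
    have key : 0 ≤ (1 - β) * (1 - α * β⁻¹) := by
      apply mul_nonneg (by linarith)
      nlinarith [mul_le_mul_of_nonneg_right hαleβ hβinv.le]
    nlinarith [mul_pos hα0 hβpos]
  have hnum : ∀ Ω : ℝ,
      ‖((((α * (β⁻¹ - β) : ℝ) : ℂ) * Complex.exp (Complex.I * (Ω : ℂ))
          + ((β : ℝ) : ℂ) - ((α ^ 2 * β⁻¹ : ℝ) : ℂ)))‖ ≤ 1 - α ^ 2 := by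
    intro Ω
    have hexp : ‖Complex.exp (Complex.I * (Ω : ℂ))‖ = 1 := by
      rw [mul_comm]
      exact Complex.norm_exp_ofReal_mul_I Ω
    have hre : (((β : ℝ) : ℂ)) - ((α ^ 2 * β⁻¹ : ℝ) : ℂ) = (((β - α ^ 2 * β⁻¹ : ℝ)) : ℂ) := by
      push_cast; ring
    calc ‖((((α * (β⁻¹ - β) : ℝ) : ℂ) * Complex.exp (Complex.I * (Ω : ℂ))
          + ((β : ℝ) : ℂ) - ((α ^ 2 * β⁻¹ : ℝ) : ℂ)))‖
        = ‖((((α * (β⁻¹ - β) : ℝ) : ℂ) * Complex.exp (Complex.I * (Ω : ℂ))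
          + (((β - α ^ 2 * β⁻¹ : ℝ)) : ℂ)))‖ := by rw [add_sub_assoc, hre]
      _ ≤ ‖(((α * (β⁻¹ - β) : ℝ) : ℂ) * Complex.exp (Complex.I * (Ω : ℂ)))‖
          + ‖((((β - α ^ 2 * β⁻¹ : ℝ)) : ℂ))‖ := norm_add_le _ _
      _ = |α * (β⁻¹ - β)| + |β - α ^ 2 * β⁻¹| := by
          rw [norm_mul, hexp, mul_one, Complex.norm_real, Complex.norm_real, Real.norm_eq_abs,
            Real.norm_eq_abs]
      _ = α * (β⁻¹ - β) + (β - α ^ 2 * β⁻¹) := by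
          rw [abs_of_nonneg h1, abs_of_nonneg h2]
      _ ≤ 1 - α ^ 2 := hsum
  refine ⟨hnum, fun Ω => ?_⟩
  have hD : 0 < 1 - 2 * α * Real.cos Ω + α ^ 2 := by
    nlinarith [Real.neg_one_le_cos Ω, Real.cos_le_one Ω, sq_nonneg (1 - α), sq_nonneg (1 + α)]
  have hK1 : 0 < K_R + 1 := by linarith
  rw [crossPowSpec, powSpec]
  rw [norm_mul, norm_div, Complex.norm_real, Complex.norm_real, Real.norm_eq_abs, Real.norm_eq_abs,
    abs_of_nonneg (by positivity : (0:ℝ) ≤ 1 / (K_R + 1)), abs_of_nonneg hD.le]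
  rw [mul_div_assoc]
  gcongr
  exact hnum Ω
end
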